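/- Let λ₂, λ₃ ≥ 0 with λ₂² + λ₃² = 1/2. The minimal control power of the maximal slice state, P = h((1 + √2·λ₂)/2), satisfies 0 ≤ P ≤ 1, with P = 1 iff λ₂ = 0 and P = 0 iff λ₃ = 0. -/

import Mathlib

noncomputable def binEnt (x : ℝ) : ℝ := -(x * Real.logb 2 x) - (1 - x) * Real.logb 2 (1 - x)

lemma binEnt_eq (x : ℝ) : binEnt x = Real.binEntropy x / Real.log 2 := by
  unfold binEnt Real.binEntropy Real.logb
  rw [Real.log_inv, Real.log_inv]
  ring

theorem mcp_maximal_slice (l2 l3 : ℝ) (h2 : 0 ≤ l2) (h3 : 0 ≤ l3)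
    (hnorm : l2^2 + l3^2 = 1/2) :
    (0 ≤ binEnt ((1 + Real.sqrt 2 * l2) / 2) ∧ binEnt ((1 + Real.sqrt 2 * l2) / 2) ≤ 1) ∧
      (binEnt ((1 + Real.sqrt 2 * l2) / 2) = 1 ↔ l2 = 0) ∧
      (binEnt ((1 + Real.sqrt 2 * l2) / 2) = 0 ↔ l3 = 0) := by
  have hlog2 : (0:ℝ) < Real.log 2 := Real.log_pos (by norm_num)
  have hs2 : (0:ℝ) < Real.sqrt 2 := Real.sqrt_pos.2 (by norm_num)
  set x : ℝ := (1 + Real.sqrt 2 * l2) / 2 with hx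
  have hl2sq : l2 ^ 2 ≤ 1 / 2 := by nlinarith [sq_nonneg l3]
  have hs2l2 : Real.sqrt 2 * l2 ≤ 1 := by
    nlinarith [Real.sq_sqrt (by norm_num : (2:ℝ) ≥ 0), Real.sqrt_nonneg 2]
  have hx0 : (1:ℝ)/2 ≤ x := by
    rw [hx]; nlinarith [mul_nonneg hs2.le h2]
  have hx1 : x ≤ 1 := by rw [hx]; linarith
  have hxhalf : x = 1/2 ↔ l2 = 0 := by
    constructor
    · intro h; rw [hx] at h
      have : Real.sqrt 2 * l2 = 0 := by linarith
      rcases mul_eq_zero.1 this with h' | h'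
      · exact absurd h' hs2.ne'
      · exact h'
    · intro h; rw [hx, h]; ring
  have hxone : x = 1 ↔ l3 = 0 := by
    constructor
    · intro h; rw [hx] at h
      have h' : Real.sqrt 2 * l2 = 1 := by linarith
      have : l2 ^ 2 = 1/2 := by
        nlinarith [Real.sq_sqrt (by norm_num : (2:ℝ) ≥ 0)]
      have : l3 ^ 2 = 0 := by linarith
      exact pow_eq_zero_iff (n := 2) (by norm_num) |>.1 this
    · intro h
      have : l2 ^ 2 = 1/2 := by rw [h] at hnorm; linarith [hnorm]
      have hl2 : l2 = Real.sqrt (1/2) := by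
        rw [← this, Real.sqrt_sq h2]
      rw [hx, hl2]
      rw [show (1:ℝ)/2 = 2⁻¹ by norm_num, show Real.sqrt 2⁻¹ = (Real.sqrt 2)⁻¹ from Real.sqrt_inv 2]
      field_simp
      norm_num
  rw [binEnt_eq]
  refine ⟨⟨?_, ?_⟩, ?_, ?_⟩
  · exact div_nonneg (Real.binEntropy_nonneg (by linarith) hx1) hlog2.le
  · rw [div_le_one hlog2]; exact Real.binEntropy_le_log_two
  · rw [div_eq_one_iff_eq hlog2.ne', ← hxhalf]
    constructor
    · intro h
      by_contra hne
      have : x ≠ 2⁻¹ := by rw [show (2:ℝ)⁻¹ = 1/2 by norm_num]; exact hne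
      exact (Real.binEntropy_lt_log_two.2 this).ne h
    · intro h; rw [h, show (1:ℝ)/2 = 2⁻¹ by norm_num, Real.binEntropy_two_inv]
  · rw [div_eq_zero_iff]
    constructor
    · intro h
      rcases h with h | h
      · rcases Real.binEntropy_eq_zero.1 h with h' | h'
        · linarith
        · exact hxone.1 h'
      · exact absurd h hlog2.ne'
    · intro h
      left
      rw [hxone.2 h, Real.binEntropy_one]
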